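/- Mean-recovery property of the observed-data influence function (kernel of Proposition 3): under assumptions (a)–(c), let φ : 𝒳 → ℝ be bounded measurable (playing the role of the full-data influence function χ̇(X; P*_X) evaluated at the truth) and let ν := E[φ(X)|𝓖]. Then E[w·(φ(X) − ν)] = 0 and E[ν + w·(φ(X) − ν)] = E[φ(X)]; that is, the observed-data influence function τ̇(O;P) = ν_C(σ_C(X)) + (S/η(C, σ_C(X)))·{χ̇(X; P*_X) − ν_C(σ_C(X))} of Proposition 3 has P-mean equal to the P*-mean of the full-data influence function. -/

import Mathlib

open MeasureTheory

theorem indicator_integrable_aux {Ω : Type*} {m : MeasurableSpace Ω} {P : Measure Ω}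
    {d : Ω → ℝ} {A : Set Ω} (h : Integrable d P) (hA : MeasurableSet[m] A) :
    Integrable (Set.indicator A d) P :=
  h.indicator hA

theorem observed_data_IF_mean_recovery_key
    {Ω : Type*} [m0 : MeasurableSpace Ω] (P : Measure Ω) [IsProbabilityMeasure P]
    {𝒳 : Type*} [MeasurableSpace 𝒳] {𝒴 : Type*} [MeasurableSpace 𝒴]
    {K : Type*} [MeasurableSpace K] [MeasurableSingletonClass K] [Countable K] [DecidableEq K]
    (infty : K)
    (X : Ω → 𝒳) (C : Ω → K) (W : Ω → 𝒴) (S : Ω → ℝ)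
    (hX : Measurable X) (hC : Measurable C) (hW : Measurable W) (hS : Measurable S)
    (hS01 : ∀ ω, S ω = 0 ∨ S ω = 1)
    (𝓖 : MeasurableSpace Ω)
    (h𝓖 : 𝓖 = MeasurableSpace.comap (fun ω => (C ω, W ω)) inferInstance)
    (η : Ω → ℝ) (hη : η = P[S | 𝓖])
    (w : Ω → ℝ) (hw : w = fun ω => if C ω = infty then 1 else S ω / η ω)
    (ha : ∀ f : 𝒳 → ℝ, Measurable f → (∃ B, ∀ x, |f x| ≤ B) →
      ∀ᵐ ω ∂P, C ω = infty → (P[fun ω' => f (X ω') | 𝓖]) ω = f (X ω))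
    (hb : ∀ f : 𝒳 → ℝ, Measurable f → (∃ B, ∀ x, |f x| ≤ B) →
      ∀ᵐ ω ∂P, C ω ≠ infty →
        (P[fun ω' => S ω' * f (X ω') | 𝓖]) ω
          = η ω * (P[fun ω' => f (X ω') | 𝓖]) ω)
    (ε : ℝ) (hε : 0 < ε)
    (hc : ∀ᵐ ω ∂P, C ω ≠ infty → ε ≤ η ω) :
    ∀ φ : 𝒳 → ℝ, Measurable φ → (∃ B, ∀ x, |φ x| ≤ B) →
      (∫ ω, w ω * (φ (X ω) - (P[fun ω' => φ (X ω') | 𝓖]) ω) ∂P = 0)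
      ∧ ∫ ω, ((P[fun ω' => φ (X ω') | 𝓖]) ω
            + w ω * (φ (X ω) - (P[fun ω' => φ (X ω') | 𝓖]) ω)) ∂P
          = ∫ ω, φ (X ω) ∂P := by
  intro φ hφ hφB
  obtain ⟨B, hB⟩ := hφB
  have hle : 𝓖 ≤ m0 := by
    rw [h𝓖]; exact (hC.prodMk hW).comap_le
  set ν : Ω → ℝ := P[fun ω' => φ (X ω') | 𝓖] with hν
  set R : NNReal := ⟨max B 0, le_max_right _ _⟩ with hR
  have hBR : ∀ x, |φ x| ≤ (R : ℝ) := fun x => (hB x).trans (le_max_left _ _)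
  have hνG : StronglyMeasurable[𝓖] ν := stronglyMeasurable_condExp
  have hνm : Measurable[m0] ν := (hνG.mono hle).measurable
  have hφXm : Measurable[m0] fun ω => φ (X ω) := hφ.comp hX
  have hφXint : Integrable (fun ω => φ (X ω)) P :=
    (integrable_const (R : ℝ)).mono' hφXm.aestronglyMeasurable
      (Filter.Eventually.of_forall fun ω => by simpa using hBR (X ω))
  have hνint : Integrable ν P := integrable_condExp
  have hνbd : ∀ᵐ ω ∂P, |ν ω| ≤ (R : ℝ) :=
    ae_bdd_condExp_of_ae_bdd (Filter.Eventually.of_forall fun ω => hBR (X ω))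
  have hS0 : ∀ ω, 0 ≤ S ω := fun ω => by rcases hS01 ω with h | h <;> simp [h]
  have hS1 : ∀ ω, |S ω| ≤ 1 := fun ω => by rcases hS01 ω with h | h <;> simp [h]
  have hSint : Integrable S P :=
    (integrable_const (1 : ℝ)).mono' hS.aestronglyMeasurable
      (Filter.Eventually.of_forall fun ω => by simpa using hS1 ω)
  set A : Set Ω := C ⁻¹' {infty} with hAdef
  have hCG : Measurable[𝓖] C := by
    rw [h𝓖]
    exact measurable_fst.comp (Measurable.of_comap_le le_rfl)
  have hAG : MeasurableSet[𝓖] A := hCG (measurableSet_singleton infty)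
  have hAcG : MeasurableSet[𝓖] Aᶜ := hAG.compl
  have hηG : StronglyMeasurable[𝓖] η := hη ▸ stronglyMeasurable_condExp
  set d : Ω → ℝ := fun ω => φ (X ω) - ν ω with hd
  have hdm : Measurable[m0] d := hφXm.sub hνm
  have hdint : Integrable d P := hφXint.sub hνint
  have hdbd : ∀ᵐ ω ∂P, |d ω| ≤ 2 * (R : ℝ) := by
    filter_upwards [hνbd] with ω hω
    calc |d ω| ≤ |φ (X ω)| + |ν ω| := abs_sub _ _
    _ ≤ (R : ℝ) + (R : ℝ) := add_le_add (hBR _) hω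
    _ = 2 * (R : ℝ) := by ring
  set g : Ω → ℝ := Set.indicator Aᶜ (fun ω => (η ω)⁻¹) with hg
  have hgG : StronglyMeasurable[𝓖] g :=
    (Measurable.indicator (m := 𝓖) (hηG.measurable.inv) hAcG).stronglyMeasurable
  have hgm : Measurable[m0] g := (hgG.mono hle).measurable
  have hgbd : ∀ᵐ ω ∂P, |g ω| ≤ ε⁻¹ := by
    filter_upwards [hc] with ω hω
    by_cases hωA : ω ∈ Aᶜ
    · have hεη : ε ≤ η ω := hω (by simpa [hAdef] using hωA)
      have hη0 : 0 < η ω := hε.trans_le hεη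
      rw [hg, Set.indicator_of_mem hωA, abs_of_pos (inv_pos.mpr hη0)]
      exact inv_anti₀ hε hεη
    · rw [hg, Set.indicator_of_notMem hωA]
      simpa using (inv_nonneg.mpr hε.le)
  set f1 : Ω → ℝ := fun ω => S ω * d ω with hf1
  have hf1m : Measurable[m0] f1 := hS.mul hdm
  have hf1int : Integrable f1 P := by
    refine (integrable_const (2 * (R : ℝ))).mono' hf1m.aestronglyMeasurable ?_
    filter_upwards [hdbd] with ω hω
    calc ‖f1 ω‖ = |S ω| * |d ω| := abs_mul _ _
    _ ≤ 1 * (2 * (R : ℝ)) := mul_le_mul (hS1 ω) hω (abs_nonneg _) zero_le_one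
    _ = 2 * (R : ℝ) := one_mul _
  have hgf1int : Integrable (g * f1) P := by
    refine (integrable_const (ε⁻¹ * (2 * (R : ℝ)))).mono'
      (hgm.mul hf1m).aestronglyMeasurable ?_
    filter_upwards [hdbd, hgbd] with ω hωd hωg
    calc ‖g ω * f1 ω‖ = |g ω| * |f1 ω| := abs_mul _ _
    _ ≤ ε⁻¹ * (2 * (R : ℝ)) := by
        refine mul_le_mul hωg ?_ (abs_nonneg _) (inv_nonneg.mpr hε.le)
        calc |f1 ω| = |S ω| * |d ω| := abs_mul _ _
        _ ≤ 1 * (2 * (R : ℝ)) := mul_le_mul (hS1 ω) hωd (abs_nonneg _) zero_le_one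
        _ = 2 * (R : ℝ) := one_mul _
  have hdecomp : ∀ ω, w ω * d ω = Set.indicator A d ω + g ω * f1 ω := by
    intro ω
    by_cases hωA : ω ∈ A
    · have hc' : C ω = infty := by simpa [hAdef] using hωA
      have hw1 : w ω = 1 := by rw [hw]; simp [hc']
      rw [hw1, Set.indicator_of_mem hωA, hg,
        Set.indicator_of_notMem (by simp [hωA] : ω ∉ Aᶜ)]
      ring
    · have hc' : C ω ≠ infty := by simpa [hAdef] using hωA
      have hw2 : w ω = S ω / η ω := by rw [hw]; simp [hc']
      rw [hw2, Set.indicator_of_notMem hωA, hg,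
        Set.indicator_of_mem (by simpa using hωA : ω ∈ Aᶜ)]
      rw [hf1, div_eq_inv_mul]
      ring
  have hAm : MeasurableSet[m0] A := hle _ hAG
  have hindint : Integrable (Set.indicator A d) P := indicator_integrable_aux hdint hAm
  -- first piece is a.e. zero
  have hind0 : ∫ ω, Set.indicator A d ω ∂P = 0 := by
    have : (fun ω => Set.indicator A d ω) =ᵐ[P] 0 := by
      filter_upwards [ha φ hφ ⟨B, hB⟩] with ω hω
      by_cases hωA : ω ∈ A
      · have : ν ω = φ (X ω) := hω (by simpa [hAdef] using hωA)
        simp [Set.indicator_of_mem hωA, hd, this]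
      · simp [Set.indicator_of_notMem hωA]
    rw [integral_congr_ae this]; simp
  -- second piece has zero integral
  have hgf0 : ∫ ω, (g * f1) ω ∂P = 0 := by
    have h1 : ∫ ω, (g * f1) ω ∂P = ∫ ω, (P[g * f1 | 𝓖]) ω ∂P :=
      (integral_condExp hle).symm
    have hpull : P[g * f1 | 𝓖] =ᵐ[P] g * P[f1 | 𝓖] :=
      condExp_mul_of_stronglyMeasurable_left hgG hgf1int hf1int
    -- compute E[f1 | 𝓖]
    have hSνint : Integrable (ν * S) P := by
      refine (integrable_const ((R : ℝ) * 1)).mono'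
        (hνm.mul hS).aestronglyMeasurable ?_
      filter_upwards [hνbd] with ω hω
      calc ‖ν ω * S ω‖ = |ν ω| * |S ω| := abs_mul _ _
      _ ≤ (R : ℝ) * 1 := mul_le_mul hω (hS1 ω) (abs_nonneg _) R.coe_nonneg
    have hSφint : Integrable (fun ω => S ω * φ (X ω)) P := by
      refine (integrable_const (1 * (R : ℝ))).mono'
        (hS.mul hφXm).aestronglyMeasurable ?_
      refine Filter.Eventually.of_forall fun ω => ?_
      calc ‖S ω * φ (X ω)‖ = |S ω| * |φ (X ω)| := abs_mul _ _
      _ ≤ 1 * (R : ℝ) := mul_le_mul (hS1 ω) (hBR _) (abs_nonneg _) zero_le_one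
    have hf1eq : f1 = (fun ω => S ω * φ (X ω)) - ν * S := by
      funext ω; simp [hf1, hd]; ring
    have hsub : P[f1 | 𝓖] =ᵐ[P]
        (P[fun ω => S ω * φ (X ω) | 𝓖]) - P[ν * S | 𝓖] := by
      rw [hf1eq]; exact condExp_sub hSφint hSνint 𝓖
    have hνS : P[ν * S | 𝓖] =ᵐ[P] ν * P[S | 𝓖] :=
      condExp_mul_of_stronglyMeasurable_left hνG hSνint hSint
    have hzero : g * P[f1 | 𝓖] =ᵐ[P] 0 := by
      filter_upwards [hsub, hνS, hb φ hφ ⟨B, hB⟩] with ω h1 h2 h3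
      by_cases hωA : ω ∈ Aᶜ
      · have hc' : C ω ≠ infty := by simpa [hAdef] using hωA
        have h3' := h3 hc'
        simp only [Pi.mul_apply, Pi.sub_apply, Pi.zero_apply] at h1 h2 ⊢
        rw [h1, h2, ← hη, h3']
        ring
      · simp only [Pi.mul_apply, Pi.zero_apply, hg,
          Set.indicator_of_notMem hωA, zero_mul]
    calc ∫ ω, (g * f1) ω ∂P = ∫ ω, (P[g * f1 | 𝓖]) ω ∂P := h1
    _ = ∫ ω, (g * P[f1 | 𝓖]) ω ∂P := integral_congr_ae hpull
    _ = 0 := by rw [integral_congr_ae hzero]; simp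
  -- main statement, first part
  have hmain : ∫ ω, w ω * d ω ∂P = 0 := by
    calc ∫ ω, w ω * d ω ∂P
        = ∫ ω, (Set.indicator A d ω + (g * f1) ω) ∂P :=
          integral_congr_ae (Filter.Eventually.of_forall fun ω => hdecomp ω)
    _ = (∫ ω, Set.indicator A d ω ∂P) + ∫ ω, (g * f1) ω ∂P :=
          integral_add hindint hgf1int
    _ = 0 := by rw [hind0, hgf0]; ring
  have hwdint : Integrable (fun ω => w ω * d ω) P :=
    (hindint.add hgf1int).congr
      (Filter.Eventually.of_forall fun ω => (hdecomp ω).symm)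
  refine ⟨hmain, ?_⟩
  calc ∫ ω, (ν ω + w ω * d ω) ∂P
      = (∫ ω, ν ω ∂P) + ∫ ω, w ω * d ω ∂P := integral_add hνint hwdint
  _ = ∫ ω, ν ω ∂P := by rw [hmain, add_zero]
  _ = ∫ ω, φ (X ω) ∂P := integral_condExp hle

/-- Mean-recovery property of the observed-data influence function (kernel of
Proposition 3): under assumptions (a)–(c), for bounded measurable `φ` with
`ν := E[φ(X)|𝓖]`, `E[w·(φ(X) − ν)] = 0` and `E[ν + w·(φ(X) − ν)] = E[φ(X)]`. -/
theorem observed_data_IF_mean_recovery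
    {Ω : Type*} [MeasurableSpace Ω] (P : Measure Ω) [IsProbabilityMeasure P]
    {𝒳 : Type*} [MeasurableSpace 𝒳] {𝒴 : Type*} [MeasurableSpace 𝒴]
    {K : Type*} [MeasurableSpace K] [MeasurableSingletonClass K] [Countable K] [DecidableEq K]
    (infty : K)
    (X : Ω → 𝒳) (C : Ω → K) (W : Ω → 𝒴) (S : Ω → ℝ)
    (hX : Measurable X) (hC : Measurable C) (hW : Measurable W) (hS : Measurable S)
    (hS01 : ∀ ω, S ω = 0 ∨ S ω = 1)
    (𝓖 : MeasurableSpace Ω)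
    (h𝓖 : 𝓖 = MeasurableSpace.comap (fun ω => (C ω, W ω)) inferInstance)
    (η : Ω → ℝ) (hη : η = P[S | 𝓖])
    (w : Ω → ℝ) (hw : w = fun ω => if C ω = infty then 1 else S ω / η ω)
    -- (a) on {C = ∞} the full data are initially observed
    (ha : ∀ f : 𝒳 → ℝ, Measurable f → (∃ B, ∀ x, |f x| ≤ B) →
      ∀ᵐ ω ∂P, C ω = infty → (P[fun ω' => f (X ω') | 𝓖]) ω = f (X ω))
    -- (b) no informative second-stage missingness (Assumption 4)
    (hb : ∀ f : 𝒳 → ℝ, Measurable f → (∃ B, ∀ x, |f x| ≤ B) →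
      ∀ᵐ ω ∂P, C ω ≠ infty →
        (P[fun ω' => S ω' * f (X ω') | 𝓖]) ω
          = η ω * (P[fun ω' => f (X ω') | 𝓖]) ω)
    -- (c) positivity (Assumption 5)
    (ε : ℝ) (hε : 0 < ε)
    (hc : ∀ᵐ ω ∂P, C ω ≠ infty → ε ≤ η ω) :
    ∀ φ : 𝒳 → ℝ, Measurable φ → (∃ B, ∀ x, |φ x| ≤ B) →
      (∫ ω, w ω * (φ (X ω) - (P[fun ω' => φ (X ω') | 𝓖]) ω) ∂P = 0)
      ∧ ∫ ω, ((P[fun ω' => φ (X ω') | 𝓖]) ω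
            + w ω * (φ (X ω) - (P[fun ω' => φ (X ω') | 𝓖]) ω)) ∂P
          = ∫ ω, φ (X ω) ∂P :=
  observed_data_IF_mean_recovery_key (m0 := _) P infty X C W S hX hC hW hS hS01 𝓖 h𝓖
    η hη w hw ha hb ε hε hc
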